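/- Let G be a group and let M(G,2) = G ⊎ Gu be the Chein loop with multiplication extending that of G and satisfying g₁(g₂u) = (g₂g₁)u, (g₁u)g₂ = (g₁g₂⁻¹)u, and (g₁u)(g₂u) = g₂⁻¹g₁. Then M(G,2) is a Moufang loop, i.e., it satisfies z(x(yx)) = ((zx)y)x for all x,y,z. -/
import Mathlib


/-- The Chein loop `M(G,2) = G ⊎ Gu`, realized on `G ⊕ G` where `Sum.inl g = g`
and `Sum.inr g = g·u`, with multiplication extending that of `G` and satisfying
(c1) `g₁(g₂u) = (g₂g₁)u`, (c2) `(g₁u)g₂ = (g₁g₂⁻¹)u`, (c3) `(g₁u)(g₂u) = g₂⁻¹g₁`. -/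
instance cheinMul (G : Type*) [Group G] : Mul (G ⊕ G) :=
  ⟨fun x y =>
    match x, y with
    | .inl a, .inl b => .inl (a * b)
    | .inl a, .inr b => .inr (b * a)
    | .inr a, .inl b => .inr (a * b⁻¹)
    | .inr a, .inr b => .inl (b⁻¹ * a)⟩

instance cheinOne (G : Type*) [Group G] : One (G ⊕ G) := ⟨Sum.inl 1⟩

section aux
variable {G : Type*} [Group G]

@[simp] lemma chein_ll (a b : G) : (Sum.inl a : G ⊕ G) * Sum.inl b = Sum.inl (a * b) := rfl
@[simp] lemma chein_lr (a b : G) : (Sum.inl a : G ⊕ G) * Sum.inr b = Sum.inr (b * a) := rfl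
@[simp] lemma chein_rl (a b : G) : (Sum.inr a : G ⊕ G) * Sum.inl b = Sum.inr (a * b⁻¹) := rfl
@[simp] lemma chein_rr (a b : G) : (Sum.inr a : G ⊕ G) * Sum.inr b = Sum.inl (b⁻¹ * a) := rfl
@[simp] lemma chein_one : (1 : G ⊕ G) = Sum.inl 1 := rfl

end aux

/-- The Chein loop `M(G,2)` is a Moufang loop: it is a loop (with identity `1` and
bijective left and right translations) satisfying the Moufang identity
(m1) `z(x(yx)) = ((zx)y)x`. -/
theorem chein_isMoufangLoop (G : Type*) [Group G] :
    (∀ x : G ⊕ G, 1 * x = x ∧ x * 1 = x) ∧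
    (∀ a : G ⊕ G, Function.Bijective fun x : G ⊕ G => a * x) ∧
    (∀ a : G ⊕ G, Function.Bijective fun x : G ⊕ G => x * a) ∧
    (∀ x y z : G ⊕ G, z * (x * (y * x)) = ((z * x) * y) * x) := by
  refine ⟨?_, ?_, ?_, ?_⟩
  · rintro (a | a) <;> simp
  · rintro (g | g)
    · refine Function.bijective_iff_has_inverse.mpr ⟨fun x => Sum.inl g⁻¹ * x, ?_, ?_⟩ <;>
        rintro (b | b) <;> simp [mul_assoc]
    · refine Function.bijective_iff_has_inverse.mpr ⟨fun x => Sum.inr g * x, ?_, ?_⟩ <;>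
        rintro (b | b) <;> simp [mul_assoc]
  · rintro (g | g)
    · refine Function.bijective_iff_has_inverse.mpr ⟨fun x => x * Sum.inl g⁻¹, ?_, ?_⟩ <;>
        rintro (b | b) <;> simp [mul_assoc]
    · refine Function.bijective_iff_has_inverse.mpr ⟨fun x => x * Sum.inr g, ?_, ?_⟩ <;>
        rintro (b | b) <;> simp [mul_assoc]
  · rintro (x | x) (y | y) (z | z) <;> simp [mul_assoc]
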